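/- Let p : U → X be a faithfully flat affine morphism with U affine, and let T = p_* p^* on quasi-coherent sheaves. For every quasi-coherent sheaf F on X, the canonical augmented cosimplicial complex F → TF → T²F → T³F → ⋯ is a resolution of F (i.e. the complex 0 → F → TF → T²F → ⋯ is exact), the Amitsur/descent resolution. -/

import Mathlib

open CategoryTheory

universe u

variable (R S : Type u) [CommRing R] [CommRing S] [Algebra R S]

/-- The monad `T = p_* p^*` associated to the faithfully flat affine morphism
`p : Spec S → Spec R`, i.e. `T M = S ⊗_R M` as an `R`-module. -/
noncomputable def Tmonad : ModuleCat.{u} R ⥤ ModuleCat.{u} R :=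
  ModuleCat.extendScalars (algebraMap R S) ⋙ ModuleCat.restrictScalars (algebraMap R S)

/-- The unit `F → TF` of the adjunction `p^* ⊣ p_*`, i.e. `m ↦ 1 ⊗ m`. -/
noncomputable def ηT : 𝟭 (ModuleCat.{u} R) ⟶ Tmonad R S :=
  (ModuleCat.extendRestrictScalarsAdj (algebraMap R S)).unit

/-- multiplication `T T X ⟶ T X` -/
noncomputable def μT (X : ModuleCat.{u} R) :
    (Tmonad R S).obj ((Tmonad R S).obj X) ⟶ (Tmonad R S).obj X :=
  (ModuleCat.restrictScalars (algebraMap R S)).map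
    ((ModuleCat.extendRestrictScalarsAdj (algebraMap R S)).counit.app
      ((ModuleCat.extendScalars (algebraMap R S)).obj X))

lemma L1 (X : ModuleCat.{u} R) : (ηT R S).app ((Tmonad R S).obj X) ≫ μT R S X = 𝟙 _ :=
  (ModuleCat.extendRestrictScalarsAdj (algebraMap R S)).right_triangle_components _

lemma L2 (X : ModuleCat.{u} R) : (Tmonad R S).map ((ηT R S).app X) ≫ μT R S X = 𝟙 _ := by
  have := congrArg (ModuleCat.restrictScalars (algebraMap R S)).map
    ((ModuleCat.extendRestrictScalarsAdj (algebraMap R S)).left_triangle_components X)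
  rw [Functor.map_comp, CategoryTheory.Functor.map_id] at this
  exact this

lemma L3 {X Y : ModuleCat.{u} R} (f : X ⟶ Y) :
    (Tmonad R S).map ((Tmonad R S).map f) ≫ μT R S Y = μT R S X ≫ (Tmonad R S).map f := by
  have := congrArg (ModuleCat.restrictScalars (algebraMap R S)).map
    ((ModuleCat.extendRestrictScalarsAdj (algebraMap R S)).counit.naturality
      ((ModuleCat.extendScalars (algebraMap R S)).map f))
  rw [Functor.map_comp, Functor.map_comp] at this
  exact this

/-- Iterates `T^n` of the monad `T`. -/
noncomputable def Tpow : ℕ → (ModuleCat.{u} R ⥤ ModuleCat.{u} R)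
  | 0 => 𝟭 _
  | n + 1 => Tpow n ⋙ Tmonad R S

/-- The coface maps `δᵢ : T^n → T^(n+1)` of the (augmented) cosimplicial Amitsur
complex, inserting the unit `η` in the `i`-th slot. -/
noncomputable def δT : (n : ℕ) → Fin (n + 1) → (Tpow R S n ⟶ Tpow R S (n + 1))
  | n, ⟨0, _⟩ => (Tpow R S n).rightUnitor.inv ≫ Functor.whiskerLeft (Tpow R S n) (ηT R S)
  | n + 1, ⟨i + 1, h⟩ => Functor.whiskerRight (δT n ⟨i, by omega⟩) (Tmonad R S)

lemma delta_zero_app (n : ℕ) (h : 0 < n + 1) (M : ModuleCat.{u} R) :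
    (δT R S n ⟨0, h⟩).app M = (ηT R S).app ((Tpow R S n).obj M) := by
  cases n with
  | zero => rw [show δT R S 0 ⟨0, h⟩ = (Tpow R S 0).rightUnitor.inv ≫ Functor.whiskerLeft (Tpow R S 0) (ηT R S) from rfl]
            show 𝟙 _ ≫ _ = _; rw [Category.id_comp]; rfl
  | succ m => rw [show δT R S (m+1) ⟨0, h⟩ = (Tpow R S (m+1)).rightUnitor.inv ≫ Functor.whiskerLeft (Tpow R S (m+1)) (ηT R S) from rfl]
              show 𝟙 _ ≫ _ = _; rw [Category.id_comp]; rfl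

lemma delta_succ_app (n i : ℕ) (h : i + 1 < n + 2) (M : ModuleCat.{u} R) :
    (δT R S (n + 1) ⟨i + 1, h⟩).app M
      = (Tmonad R S).map ((δT R S n ⟨i, by omega⟩).app M) := by rw [δT]; rfl

lemma K1 (M : ModuleCat.{u} R) : ∀ (i n j : ℕ) (hij : i ≤ j) (hj : j ≤ n),
    (δT R S n ⟨j, by omega⟩).app M ≫ (δT R S (n + 1) ⟨i, by omega⟩).app M =
      (δT R S n ⟨i, by omega⟩).app M ≫ (δT R S (n + 1) ⟨j + 1, by omega⟩).app M := by
  intro i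
  induction i with
  | zero =>
    intro n j hij hj
    rw [delta_zero_app, delta_zero_app]
    have := (ηT R S).naturality ((δT R S n ⟨j, by omega⟩).app M)
    simp only [Functor.id_map] at this
    refine this.trans ?_
    rw [delta_succ_app]
    rfl
  | succ i IH =>
    intro n j hij hj
    obtain ⟨j, rfl⟩ : ∃ j', j = j' + 1 := ⟨j - 1, by omega⟩
    obtain ⟨n, rfl⟩ : ∃ n', n = n' + 1 := ⟨n - 1, by omega⟩
    rw [delta_succ_app, delta_succ_app, delta_succ_app, delta_succ_app]
    have := congrArg (Tmonad R S).map (IH n j (by omega) (by omega))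
    rw [Functor.map_comp, Functor.map_comp] at this
    exact this

/-- The differential `dⁿ = Σ (-1)ⁱ δᵢ : T^n F → T^(n+1) F` of the Amitsur (descent)
complex `0 → F → TF → T²F → ⋯`. -/
noncomputable def dT (n : ℕ) (M : ModuleCat.{u} R) :
    (Tpow R S n).obj M ⟶ (Tpow R S (n + 1)).obj M :=
  ∑ i : Fin (n + 1), ((-1 : ℤ) ^ (i : ℕ)) • (δT R S n i).app M

lemma K2aux (M : ModuleCat.{u} R) (n i j : ℕ) (hij : i ≤ j) (hj : j ≤ n) :
    ((-1 : ℤ) ^ (j + i)) • ((δT R S n ⟨j, by omega⟩).app M ≫ (δT R S (n + 1) ⟨i, by omega⟩).app M)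
      + ((-1 : ℤ) ^ (i + (j + 1))) •
        ((δT R S n ⟨i, by omega⟩).app M ≫ (δT R S (n + 1) ⟨j + 1, by omega⟩).app M) = 0 := by
  rw [K1 R S M i n j hij hj]
  rw [show (-1 : ℤ) ^ (i + (j + 1)) = -(-1 : ℤ) ^ (j + i) by
    rw [show i + (j + 1) = (j + i) + 1 by omega, pow_succ]; ring]
  rw [neg_smul, add_neg_cancel]

noncomputable def K2f (n : ℕ) (M : ModuleCat.{u} R) :
    Fin (n + 1) × Fin (n + 2) → ((Tpow R S n).obj M ⟶ (Tpow R S (n + 2)).obj M) := fun ji =>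
  ((-1 : ℤ) ^ ((ji.1 : ℕ) + (ji.2 : ℕ))) • ((δT R S n ji.1).app M ≫ (δT R S (n + 1) ji.2).app M)

def K2g (n : ℕ) : Fin (n + 1) × Fin (n + 2) → Fin (n + 1) × Fin (n + 2) := fun ji =>
  if h : (ji.2 : ℕ) ≤ (ji.1 : ℕ)
    then Prod.mk (Fin.mk (ji.2 : ℕ) (by have := ji.1.2; omega))
      (Fin.mk ((ji.1 : ℕ) + 1) (by have := ji.1.2; omega))
    else Prod.mk (Fin.mk ((ji.2 : ℕ) - 1) (by have := ji.2.2; omega))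
      (Fin.mk (ji.1 : ℕ) (by have := ji.1.2; omega))

lemma K2g_pos (n : ℕ) (ji : Fin (n + 1) × Fin (n + 2)) (h : (ji.2 : ℕ) ≤ (ji.1 : ℕ)) :
    K2g n ji = Prod.mk (Fin.mk (ji.2 : ℕ) (by have := ji.1.2; omega))
      (Fin.mk ((ji.1 : ℕ) + 1) (by have := ji.1.2; omega)) := dif_pos h

lemma K2g_neg (n : ℕ) (ji : Fin (n + 1) × Fin (n + 2)) (h : ¬ (ji.2 : ℕ) ≤ (ji.1 : ℕ)) :
    K2g n ji = Prod.mk (Fin.mk ((ji.2 : ℕ) - 1) (by have := ji.2.2; omega))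
      (Fin.mk (ji.1 : ℕ) (by have := ji.1.2; omega)) := dif_neg h

lemma K2key (n : ℕ) (M : ModuleCat.{u} R) (i j : ℕ) (hij : i ≤ j) (hj : j ≤ n) :
    K2f R S n M (Prod.mk (Fin.mk j (by omega)) (Fin.mk i (by omega)))
      + K2f R S n M (Prod.mk (Fin.mk i (by omega)) (Fin.mk (j + 1) (by omega))) = 0 :=
  K2aux R S M n i j hij hj

lemma K2sum (n : ℕ) (M : ModuleCat.{u} R) (ji : Fin (n + 1) × Fin (n + 2)) :
    K2f R S n M ji + K2f R S n M (K2g n ji) = 0 := by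
  by_cases h : (ji.2 : ℕ) ≤ (ji.1 : ℕ)
  · rw [K2g_pos n ji h]
    have := K2key R S n M ji.2 ji.1 h (by have := ji.1.2; omega)
    simpa using this
  · rw [K2g_neg n ji h]
    push_neg at h
    have := K2key R S n M ji.1 ((ji.2 : ℕ) - 1) (by omega) (by have := ji.2.2; omega)
    have e : ((ji.2 : ℕ) - 1) + 1 = (ji.2 : ℕ) := by omega
    have e3 : Prod.mk (Fin.mk (ji.1 : ℕ) (by have := ji.1.2; omega))
        (Fin.mk (((ji.2 : ℕ) - 1) + 1) (by have := ji.2.2; omega)) = ji :=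
      Prod.ext (Fin.ext rfl) (Fin.ext e)
    rw [e3] at this
    rw [← this]
    exact add_comm _ _

lemma K2ne (n : ℕ) (ji : Fin (n + 1) × Fin (n + 2)) : K2g n ji ≠ ji := by
  intro hc
  by_cases h : (ji.2 : ℕ) ≤ (ji.1 : ℕ)
  · rw [K2g_pos n ji h] at hc
    have h2 : (ji.1 : ℕ) + 1 = (ji.2 : ℕ) :=
      congrArg (fun p : Fin (n + 1) × Fin (n + 2) => (p.2 : ℕ)) hc
    omega
  · rw [K2g_neg n ji h] at hc
    have h2 : (ji.1 : ℕ) = (ji.2 : ℕ) :=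
      congrArg (fun p : Fin (n + 1) × Fin (n + 2) => (p.2 : ℕ)) hc
    omega

lemma K2invol (n : ℕ) (ji : Fin (n + 1) × Fin (n + 2)) : K2g n (K2g n ji) = ji := by
  by_cases h : (ji.2 : ℕ) ≤ (ji.1 : ℕ)
  · rw [K2g_pos n ji h]
    rw [K2g_neg n (Prod.mk (Fin.mk (ji.2 : ℕ) (by have := ji.1.2; omega))
      (Fin.mk ((ji.1 : ℕ) + 1) (by have := ji.1.2; omega))) (by simp; omega)]
    exact Prod.ext (Fin.ext (by simp)) (Fin.ext (by simp))
  · rw [K2g_neg n ji h]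
    push_neg at h
    rw [K2g_pos n (Prod.mk (Fin.mk ((ji.2 : ℕ) - 1) (by have := ji.2.2; omega))
      (Fin.mk (ji.1 : ℕ) (by have := ji.1.2; omega))) (by simp; omega)]
    refine Prod.ext (Fin.ext ?_) (Fin.ext ?_)
    · simp
    · simp; omega

lemma K2 (n : ℕ) (M : ModuleCat.{u} R) : dT R S n M ≫ dT R S (n + 1) M = 0 := by
  have expand : dT R S n M ≫ dT R S (n + 1) M
      = ∑ ji : Fin (n + 1) × Fin (n + 2), K2f R S n M ji := by
    rw [Fintype.sum_prod_type]
    dsimp only [dT, K2f]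
    rw [Preadditive.sum_comp]
    refine Finset.sum_congr rfl fun j _ => ?_
    rw [Preadditive.comp_sum]
    refine Finset.sum_congr rfl fun i _ => ?_
    rw [Preadditive.zsmul_comp, Preadditive.comp_zsmul, smul_smul, ← pow_add]
  rw [expand]
  exact Finset.sum_ninvolution (K2g n) (K2sum R S n M) (fun ji _ => K2ne n ji)
    (fun _ => Finset.mem_univ _) (K2invol n)

instance extendScalars_additive : (ModuleCat.extendScalars.{u,u,u} (algebraMap R S)).Additive where
  map_add {X Y f g} := by
    apply ModuleCat.hom_ext; apply LinearMap.ext; intro x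
    induction x using TensorProduct.induction_on with
    | zero => erw [map_zero]
    | tmul s m =>
      show s ⊗ₜ[R] (f m + g m) = s ⊗ₜ[R] (f m) + s ⊗ₜ[R] (g m)
      exact TensorProduct.tmul_add _ _ _
    | add x y hx hy =>
      erw [map_add, map_add, hx, hy]

instance restrictScalars_additive : (ModuleCat.restrictScalars.{u,u,u} (algebraMap R S)).Additive where
  map_add := ModuleCat.hom_ext (LinearMap.ext fun _ => rfl)

instance Tmonad_additive : (Tmonad R S).Additive := by
  unfold Tmonad; infer_instance

/-- `T.map (dT n M)`, with normalized types. -/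
noncomputable def Dmap (n : ℕ) (M : ModuleCat.{u} R) :
    (Tpow R S (n + 1)).obj M ⟶ (Tpow R S (n + 2)).obj M :=
  (Tmonad R S).map (dT R S n M)

/-- The contracting homotopy: multiplication of the two outer tensor factors. -/
noncomputable def hT (n : ℕ) (M : ModuleCat.{u} R) :
    (Tpow R S (n + 2)).obj M ⟶ (Tpow R S (n + 1)).obj M :=
  μT R S ((Tpow R S n).obj M)

lemma K3 (n : ℕ) (M : ModuleCat.{u} R) :
    Dmap R S (n + 1) M ≫ hT R S (n + 1) M + hT R S n M ≫ Dmap R S n M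
      = 𝟙 ((Tpow R S (n + 2)).obj M) := by
  have hterm0 : (Tmonad R S).map ((δT R S (n + 1) ⟨0, by omega⟩).app M)
      ≫ μT R S ((Tpow R S (n + 1)).obj M) = 𝟙 ((Tpow R S (n + 2)).obj M) := by
    rw [delta_zero_app]
    exact L2 R S ((Tpow R S (n + 1)).obj M)
  have htermS : ∀ i : Fin (n + 1),
      (Tmonad R S).map ((δT R S (n + 1) i.succ).app M) ≫ μT R S ((Tpow R S (n + 1)).obj M)
        = μT R S ((Tpow R S n).obj M) ≫ (Tmonad R S).map ((δT R S n i).app M) := by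
    intro i
    have h1 : (δT R S (n + 1) i.succ).app M = (Tmonad R S).map ((δT R S n i).app M) :=
      delta_succ_app R S n (i : ℕ) (by have := i.2; omega) M
    exact (congrArg (fun t => (Tmonad R S).map t ≫ μT R S ((Tpow R S (n + 1)).obj M)) h1).trans
      (L3 R S ((δT R S n i).app M))
  have hmap : Dmap R S (n + 1) M ≫ hT R S (n + 1) M
      = 𝟙 ((Tpow R S (n + 2)).obj M) - hT R S n M ≫ Dmap R S n M := by
    have step1 : Dmap R S (n + 1) M ≫ hT R S (n + 1) M
        = ∑ i : Fin (n + 2), ((-1 : ℤ) ^ (i : ℕ)) •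
            ((Tmonad R S).map ((δT R S (n + 1) i).app M) ≫ μT R S ((Tpow R S (n + 1)).obj M)) := by
          dsimp only [Dmap, hT, dT]
          erw [Functor.map_sum, Preadditive.sum_comp]
          exact Finset.sum_congr rfl fun i _ => by
            erw [Functor.map_zsmul, Preadditive.zsmul_comp]
            rfl
    have step2 : ∑ i : Fin (n + 2), ((-1 : ℤ) ^ (i : ℕ)) •
            ((Tmonad R S).map ((δT R S (n + 1) i).app M) ≫ μT R S ((Tpow R S (n + 1)).obj M))
        = 𝟙 ((Tpow R S (n + 2)).obj M) - hT R S n M ≫ Dmap R S n M := by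
          rw [Fin.sum_univ_succ]
          rw [show (0 : Fin (n + 2)) = (⟨0, by omega⟩ : Fin (n + 2)) from Fin.ext (by simp)]
          rw [hterm0]
          have tail : ∀ i : Fin (n + 1), ((-1 : ℤ) ^ ((i.succ : Fin (n + 2)) : ℕ)) •
              ((Tmonad R S).map ((δT R S (n + 1) i.succ).app M)
                ≫ μT R S ((Tpow R S (n + 1)).obj M))
              = -(((-1 : ℤ) ^ (i : ℕ)) • (μT R S ((Tpow R S n).obj M)
                  ≫ (Tmonad R S).map ((δT R S n i).app M))) := by
            intro i
            rw [htermS i, Fin.val_succ, pow_succ, mul_comm, neg_one_mul]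
            exact neg_smul _ _
          rw [Finset.sum_congr rfl fun i _ => tail i]
          have final : ∑ i : Fin (n + 1), ((-1 : ℤ) ^ (i : ℕ)) • (μT R S ((Tpow R S n).obj M)
              ≫ (Tmonad R S).map ((δT R S n i).app M)) = hT R S n M ≫ Dmap R S n M := by
            dsimp only [hT, Dmap, dT]
            erw [Functor.map_sum, Preadditive.comp_sum]
            exact Finset.sum_congr rfl fun i _ => by
              erw [Functor.map_zsmul, Preadditive.comp_zsmul]
              rfl
          erw [Finset.sum_neg_distrib, final]
          simp only [Fin.val_zero, pow_zero, one_smul]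
          abel
    exact step1.trans step2
  rw [hmap]
  abel

noncomputable instance TmonadModuleS (X : ModuleCat.{u} R) : Module S ((Tmonad R S).obj X) :=
  inferInstanceAs (Module S ((ModuleCat.restrictScalars (algebraMap R S)).obj
    ((ModuleCat.extendScalars (algebraMap R S)).obj X)))

/-- `S`, as the carrier of the restricted-scalars module. -/
noncomputable def Scar : Type u :=
  ((ModuleCat.restrictScalars (algebraMap R S)).obj (ModuleCat.of S S) : Type u)

def toS : Scar R S → S := fun t => t
def ofS : S → Scar R S := fun t => t

/-- pure tensors in `T X`. -/
noncomputable def tmul' (X : ModuleCat.{u} R) (t : Scar R S) (x : X) : (Tmonad R S).obj X :=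
  (TensorProduct.tmul R t x : (Tmonad R S).obj X)

lemma eta_eq (X : ModuleCat.{u} R) (x : X) :
    (ηT R S).app X x = tmul' R S X (ofS R S 1) x := rfl

lemma smul_tmul'' (X : ModuleCat.{u} R) (s : S) (t : Scar R S) (x : X) :
    s • tmul' R S X t x = tmul' R S X (ofS R S (s * toS R S t)) x := rfl

lemma rsmul_def (X : ModuleCat.{u} R) (r : R) (y : (Tmonad R S).obj X) :
    r • y = (algebraMap R S r) • y := rfl

/-- `S ⊗[R] X →+ T X`. -/
noncomputable def toT (X : ModuleCat.{u} R) :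
    TensorProduct R S X →+ ((Tmonad R S).obj X) :=
  TensorProduct.liftAddHom
    { toFun := fun s =>
        { toFun := fun x => s • ((ηT R S).app X x)
          map_zero' := by dsimp only; rw [map_zero, smul_zero]
          map_add' := fun x y => by dsimp only; rw [map_add, smul_add] }
      map_zero' := AddMonoidHom.ext fun x => by
        show (0 : S) • ((ηT R S).app X x) = 0
        rw [zero_smul]
      map_add' := fun s t => AddMonoidHom.ext fun x => by
        show (s + t) • ((ηT R S).app X x) = s • ((ηT R S).app X x) + t • ((ηT R S).app X x)
        rw [add_smul] }
    (fun r s x => by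
      show (r • s) • ((ηT R S).app X x) = s • ((ηT R S).app X (r • x))
      rw [map_smul, Algebra.smul_def, mul_smul]
      rw [rsmul_def, smul_comm])

lemma toT_tmul (X : ModuleCat.{u} R) (s : S) (x : X) :
    toT R S X (s ⊗ₜ[R] x) = s • ((ηT R S).app X x) :=
  TensorProduct.liftAddHom_tmul _ _ _ _

lemma smul_unit_eq (X : ModuleCat.{u} R) (s : S) (x : X) :
    s • ((ηT R S).app X x) = tmul' R S X (ofS R S s) x := by
  rw [eta_eq, smul_tmul'']
  show tmul' R S X (ofS R S (s * 1)) x = _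
  rw [mul_one]

/-- `T X →+ S ⊗[R] X`. -/
noncomputable def fromT (X : ModuleCat.{u} R) :
    ((Tmonad R S).obj X) →+ TensorProduct R S X :=
  TensorProduct.liftAddHom
    { toFun := fun t =>
        { toFun := fun x => toS R S t ⊗ₜ[R] x
          map_zero' := TensorProduct.tmul_zero _ _
          map_add' := fun x y => TensorProduct.tmul_add _ x y }
      map_zero' := AddMonoidHom.ext fun x => TensorProduct.zero_tmul _ x
      map_add' := fun s t => AddMonoidHom.ext fun x => TensorProduct.add_tmul _ _ x }
    (fun r t x => by
      show (toS R S (r • t)) ⊗ₜ[R] x = toS R S t ⊗ₜ[R] (r • x)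
      have e : toS R S (r • t) = r • toS R S t := by
        show algebraMap R S r * toS R S t = r • toS R S t
        rw [← Algebra.smul_def]
      rw [e]
      exact TensorProduct.smul_tmul r _ x)

lemma fromT_tmul' (X : ModuleCat.{u} R) (t : Scar R S) (x : X) :
    fromT R S X (tmul' R S X t x) = toS R S t ⊗ₜ[R] x :=
  TensorProduct.liftAddHom_tmul _ _ _ _

lemma toT_surj (X : ModuleCat.{u} R) : Function.Surjective (toT R S X) := by
  intro y
  induction y using TensorProduct.induction_on with
  | zero => exact ⟨0, map_zero _⟩
  | tmul t x =>
    refine ⟨(toS R S t) ⊗ₜ[R] x, ?_⟩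
    rw [toT_tmul, smul_unit_eq]
    rfl
  | add a b ha hb =>
    obtain ⟨w1, hw1⟩ := ha
    obtain ⟨w2, hw2⟩ := hb
    exact ⟨w1 + w2, by rw [map_add, hw1, hw2]; rfl⟩

lemma toT_left_inv (X : ModuleCat.{u} R) (z : TensorProduct R S X) :
    fromT R S X (toT R S X z) = z := by
  induction z using TensorProduct.induction_on with
  | zero => rw [map_zero, map_zero]
  | tmul s x => rw [toT_tmul, smul_unit_eq, fromT_tmul']; rfl
  | add a b ha hb => rw [map_add, map_add, ha, hb]

/-- The additive equivalence `S ⊗[R] X ≃+ T X`. -/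
noncomputable def eT (X : ModuleCat.{u} R) :
    TensorProduct R S X ≃+ ((Tmonad R S).obj X) where
  toFun := toT R S X
  invFun := fromT R S X
  left_inv := toT_left_inv R S X
  right_inv y := by
    obtain ⟨w, rfl⟩ := toT_surj R S X y
    rw [toT_left_inv]
  map_add' := map_add _

lemma eT_comm {X Y : ModuleCat.{u} R} (f : X ⟶ Y) (z : TensorProduct R S X) :
    eT R S Y (LinearMap.lTensor S f.hom z) = (Tmonad R S).map f (eT R S X z) := by
  show toT R S Y (LinearMap.lTensor S f.hom z) = (Tmonad R S).map f (toT R S X z)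
  induction z using TensorProduct.induction_on with
  | zero => rw [map_zero, map_zero, map_zero, map_zero]
  | tmul s x =>
    rw [LinearMap.lTensor_tmul, toT_tmul, toT_tmul]
    have hlin : (Tmonad R S).map f (s • ((ηT R S).app X x))
        = s • ((Tmonad R S).map f ((ηT R S).app X x)) :=
      ((ModuleCat.extendScalars (algebraMap R S)).map f).hom.map_smul s ((ηT R S).app X x)
    rw [hlin]
    have hnat : (Tmonad R S).map f ((ηT R S).app X x) = (ηT R S).app Y (f x) := by
      have := (ηT R S).naturality f
      have h2 := ConcreteCategory.congr_hom this x
      exact h2.symm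
    rw [hnat]
  | add a b ha hb => simp only [map_add, ha, hb]

lemma exact_of_homotopy {A B C : ModuleCat.{u} R} (f : A ⟶ B) (g : B ⟶ C)
    (h1 : B ⟶ A) (h2 : C ⟶ B) (hgf : f ≫ g = 0)
    (hh : g ≫ h2 + h1 ≫ f = 𝟙 B) : Function.Exact ⇑f ⇑g := by
  intro b
  constructor
  · intro hb
    refine ⟨h1 b, ?_⟩
    have := ConcreteCategory.congr_hom hh b
    have happ : h2 (g b) + f (h1 b) = b := this
    rw [hb, map_zero, zero_add] at happ
    exact happ
  · rintro ⟨a, rfl⟩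
    have := ConcreteCategory.congr_hom hgf a
    exact this

lemma exact_cat (n : ℕ) (M : ModuleCat.{u} R) :
    Function.Exact ⇑(Dmap R S n M) ⇑(Dmap R S (n + 1) M) := by
  refine exact_of_homotopy R _ _ (hT R S n M) (hT R S (n + 1) M) ?_ (K3 R S n M)
  show (Tmonad R S).map (dT R S n M) ≫ (Tmonad R S).map (dT R S (n + 1) M) = 0
  rw [← Functor.map_comp, K2, Functor.map_zero]

lemma exact_lTensor (n : ℕ) (M : ModuleCat.{u} R) :
    Function.Exact ⇑(LinearMap.lTensor S (dT R S n M).hom)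
      ⇑(LinearMap.lTensor S (dT R S (n + 1) M).hom) := by
  have H : Function.Exact (⇑((Dmap R S n M).hom.toAddMonoidHom))
      (⇑((Dmap R S (n + 1) M).hom.toAddMonoidHom)) := exact_cat R S n M
  have := Function.Exact.of_ladder_addEquiv_of_exact'
    (e₁ := eT R S ((Tpow R S n).obj M)) (e₂ := eT R S ((Tpow R S (n + 1)).obj M))
    (e₃ := eT R S ((Tpow R S (n + 2)).obj M))
    (f₁₂ := (LinearMap.lTensor S (dT R S n M).hom).toAddMonoidHom)
    (f₂₃ := (LinearMap.lTensor S (dT R S (n + 1) M).hom).toAddMonoidHom)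
    (g₁₂ := (Dmap R S n M).hom.toAddMonoidHom)
    (g₂₃ := (Dmap R S (n + 1) M).hom.toAddMonoidHom)
    (AddMonoidHom.ext fun z => (eT_comm R S (dT R S n M) z).symm)
    (AddMonoidHom.ext fun z => (eT_comm R S (dT R S (n + 1) M) z).symm) H
  exact this

lemma Tmapη_inj (M : ModuleCat.{u} R) :
    Function.Injective ⇑((Tmonad R S).map ((ηT R S).app M)) := by
  intro a b hab
  have h1 := ConcreteCategory.congr_hom (L2 R S M) a
  have h2 := ConcreteCategory.congr_hom (L2 R S M) b
  have e1 : μT R S M ((Tmonad R S).map ((ηT R S).app M) a) = a := h1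
  have e2 : μT R S M ((Tmonad R S).map ((ηT R S).app M) b) = b := h2
  rw [← e1, ← e2, hab]

lemma lTensorη_inj (M : ModuleCat.{u} R) :
    Function.Injective ⇑(LinearMap.lTensor S ((ηT R S).app M).hom) := by
  have hcomp : Function.Injective
      ((eT R S ((Tmonad R S).obj M)) ∘ ⇑(LinearMap.lTensor S ((ηT R S).app M).hom)) := by
    have he : ((eT R S ((Tmonad R S).obj M)) ∘ ⇑(LinearMap.lTensor S ((ηT R S).app M).hom))
        = (⇑((Tmonad R S).map ((ηT R S).app M)) ∘ (eT R S M)) := by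
      funext z
      exact eT_comm R S ((ηT R S).app M) z
    rw [he]
    exact (Tmapη_inj R S M).comp (eT R S M).injective
  exact Function.Injective.of_comp hcomp

lemma η_inj [Module.FaithfullyFlat R S] (M : ModuleCat.{u} R) :
    Function.Injective ⇑((ηT R S).app M) := by
  set z0 : PUnit.{u+1} →ₗ[R] M := 0 with hz0
  have hex : Function.Exact (z0.lTensor S) (((ηT R S).app M).hom.lTensor S) := by
    intro y
    constructor
    · intro hy
      refine ⟨0, ?_⟩
      have : y = 0 := lTensorη_inj R S M (by rw [hy, map_zero])
      rw [map_zero, this]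
    · rintro ⟨w, rfl⟩
      rw [hz0, LinearMap.lTensor_zero]
      rfl
  have hexact := Module.FaithfullyFlat.lTensor_reflects_exact R S z0 _ hex
  intro a b hab
  have h0 : ((ηT R S).app M) (a - b) = 0 := by rw [map_sub, hab, sub_self]
  obtain ⟨w, hw⟩ := (hexact (a - b)).mp h0
  have : a - b = 0 := by rw [← hw, hz0]; rfl
  exact sub_eq_zero.mp this

/-- **Amitsur/descent resolution.**  Let `p : U → X` be a faithfully flat affine
morphism with `U` affine (here in the affine situation: a faithfully flat ring map
`R → S`), and let `T = p_* p^*` on (quasi-coherent) modules.  For every module `F`,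
the augmented cosimplicial complex `0 → F → TF → T²F → T³F → ⋯` is exact: the unit
`F → TF` is injective and the complex is exact at each `TⁿF`. -/
theorem stmt19 [Module.FaithfullyFlat R S] (M : ModuleCat.{u} R) :
    Function.Injective ⇑((ηT R S).app M) ∧
      ∀ n : ℕ, Function.Exact ⇑(dT R S n M) ⇑(dT R S (n + 1) M) := by
  refine ⟨η_inj R S M, fun n => ?_⟩
  exact Module.FaithfullyFlat.lTensor_reflects_exact R S (dT R S n M).hom (dT R S (n + 1) M).hom
    (exact_lTensor R S n M)
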